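/- arXiv:1409.0830 — 2 statements merged into one kernel-verified Lean document; each statement's English description precedes it below -/
import Mathlib

section
/- The dilogarithm identity Li₂(2−√2) + Li₂(1/√2) − Li₂(√2−1) − Li₂(1−1/√2) = π²/12 holds. -/
open Real MeasureTheory intervalIntegral

open Set Filter Topology

noncomputable section

/-- The real dilogarithm Li₂(x) = ∑_{k ≥ 1} x^k/k². -/
def Li2 (x : ℝ) : ℝ := ∑' k : ℕ, x ^ (k + 1) / ((k : ℝ) + 1) ^ 2

lemma summable_inv_sq : Summable (fun k : ℕ => 1 / ((k : ℝ) + 1) ^ 2) := by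
  have := (Real.summable_one_div_nat_pow (p := 2)).mpr one_lt_two
  have h2 := (summable_nat_add_iff 1).mpr this
  refine h2.congr fun k => ?_
  push_cast
  ring

lemma li2_summable {x : ℝ} (h : |x| ≤ 1) :
    Summable (fun k : ℕ => x ^ (k + 1) / ((k : ℝ) + 1) ^ 2) := by
  refine Summable.of_norm_bounded summable_inv_sq fun k => ?_
  have hk : (0:ℝ) < ((k : ℝ) + 1) ^ 2 := by positivity
  rw [Real.norm_eq_abs, abs_div, abs_pow, abs_of_pos hk]
  gcongr
  exact pow_le_one₀ (abs_nonneg x) h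

lemma li2_continuousOn : ContinuousOn Li2 (Icc (-1 : ℝ) 1) := by
  refine continuousOn_tsum (fun i => ?_) summable_inv_sq (fun n x hx => ?_)
  · exact ((continuous_pow _).div_const _).continuousOn
  · have hk : (0:ℝ) < ((n : ℝ) + 1) ^ 2 := by positivity
    rw [Real.norm_eq_abs, abs_div, abs_pow, abs_of_pos hk]
    have : |x| ≤ 1 := abs_le.mpr ⟨hx.1, hx.2⟩
    gcongr
    exact pow_le_one₀ (abs_nonneg x) this

lemma li2_zero : Li2 0 = 0 := by
  simp [Li2]

lemma li2_one : Li2 1 = π ^ 2 / 6 := by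
  have h := hasSum_zeta_two
  have h1 : HasSum (fun n : ℕ => (1:ℝ) / ((n:ℝ) + 1) ^ 2) (π ^ 2 / 6) := by
    have h2 : HasSum (fun n : ℕ => (1:ℝ) / ((n:ℕ) + 1 : ℕ) ^ 2) (π ^ 2 / 6) :=
      (hasSum_nat_add_iff (f := fun n : ℕ => (1:ℝ) / (n:ℝ) ^ 2) 1).mpr (by simpa using h)
    refine h2.congr_fun fun n => ?_
    push_cast
    ring
  have : HasSum (fun n : ℕ => (1:ℝ) ^ (n+1) / ((n:ℝ) + 1) ^ 2) (π ^ 2 / 6) := by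
    simpa using h1
  exact this.tsum_eq

lemma li2_hasDerivAt {x : ℝ} (hx : |x| < 1) (hx0 : x ≠ 0) :
    HasDerivAt Li2 (-Real.log (1 - x) / x) x := by
  set r : ℝ := (1 + |x|) / 2 with hr
  have hr0 : 0 ≤ r := by positivity
  have hxr : |x| < r := by rw [hr]; linarith
  have hr1 : r < 1 := by rw [hr]; linarith
  have key : HasDerivAt Li2 (∑' n : ℕ, x ^ n / ((n : ℝ) + 1)) x := by
    refine hasDerivAt_tsum_of_isPreconnected (u := fun n : ℕ => r ^ n)
      (g := fun (n : ℕ) (y : ℝ) => y ^ (n + 1) / ((n : ℝ) + 1) ^ 2)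
      (g' := fun (n : ℕ) (y : ℝ) => y ^ n / ((n : ℝ) + 1)) (y₀ := x)
      (summable_geometric_of_lt_one hr0 hr1) (Metric.isOpen_ball (x := (0:ℝ)) (ε := r))
      (convex_ball _ _).isPreconnected (fun n y _ => ?_) (fun n y hy => ?_)
      ?_ ?_ ?_
    · have h1 : HasDerivAt (fun y : ℝ => y ^ (n + 1)) ((n + 1 : ℕ) * y ^ n) y :=
        hasDerivAt_pow (n + 1) y
      have h2 := h1.div_const (((n : ℝ) + 1) ^ 2)
      refine h2.congr_deriv ?_
      have : ((n : ℝ) + 1) ≠ 0 := by positivity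
      push_cast
      field_simp
    · rw [Metric.mem_ball, dist_zero_right, Real.norm_eq_abs] at hy
      rw [Real.norm_eq_abs, abs_div, abs_pow]
      have h1 : |((n : ℝ) + 1)| = (n : ℝ) + 1 := abs_of_pos (by positivity)
      rw [h1]
      calc |y| ^ n / ((n : ℝ) + 1) ≤ r ^ n / 1 := by
            have hyr : |y| ≤ r := hy.le
            gcongr
            simp
        _ = r ^ n := by simp
    · rw [Metric.mem_ball, dist_zero_right, Real.norm_eq_abs]; exact hxr
    · exact li2_summable hx.le
    · rw [Metric.mem_ball, dist_zero_right, Real.norm_eq_abs]; exact hxr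
  have hsum : HasSum (fun n : ℕ => x ^ n / ((n : ℝ) + 1)) (-Real.log (1 - x) / x) := by
    have h1 := Real.hasSum_pow_div_log_of_abs_lt_one hx
    have h2 := h1.div_const x
    refine h2.congr_fun fun n => ?_
    rw [pow_succ]
    field_simp
  rwa [hsum.tsum_eq] at key

lemma const_of_deriv_zero {f : ℝ → ℝ} {a b : ℝ} (hab : a < b)
    (hc : ContinuousOn f (Icc a b)) (hd : ∀ x ∈ Ioo a b, HasDerivAt f 0 x) :
    f b = f a := by
  obtain ⟨c, _, hc0⟩ := exists_hasDerivAt_eq_slope f (fun _ => 0) hab hc hd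
  have hba : b - a ≠ 0 := by linarith
  have : f b - f a = 0 := by
    have := hc0.symm
    rw [div_eq_iff hba] at this
    linarith
  linarith

private lemma refl_deriv {t : ℝ} (ht : t ∈ Ioo (0:ℝ) 1) :
    HasDerivAt (fun y : ℝ => Li2 y + Li2 (1 - y) + Real.log y * Real.log (1 - y)) 0 t := by
  obtain ⟨ht0, ht1⟩ := ht
  have h1t0 : (0:ℝ) < 1 - t := by linarith
  have h1 : HasDerivAt Li2 (-Real.log (1 - t) / t) t :=
    li2_hasDerivAt (by rw [abs_lt]; constructor <;> linarith) (ne_of_gt ht0)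
  have hinner : HasDerivAt (fun y : ℝ => 1 - y) (-1) t := (hasDerivAt_id t).const_sub 1
  have h2base : HasDerivAt Li2 (-Real.log (1 - (1 - t)) / (1 - t)) (1 - t) :=
    li2_hasDerivAt (by rw [abs_lt]; constructor <;> linarith) (ne_of_gt h1t0)
  have h2 := h2base.comp t hinner
  have h3a : HasDerivAt Real.log t⁻¹ t := Real.hasDerivAt_log (ne_of_gt ht0)
  have h3b : HasDerivAt (fun y : ℝ => Real.log (1 - y)) ((1 - t)⁻¹ * (-1)) t :=
    (Real.hasDerivAt_log (ne_of_gt h1t0)).comp t hinner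
  have h3 := h3a.mul h3b
  have h := (h1.add h2).add h3
  refine h.congr_deriv ?_
  have : (1 : ℝ) - (1 - t) = t := by ring
  rw [this]
  field_simp
  ring

private lemma refl_const {a b : ℝ} (ha : a ∈ Ioo (0:ℝ) 1) (hb : b ∈ Ioo (0:ℝ) 1)
    (hab : a < b) :
    Li2 b + Li2 (1 - b) + Real.log b * Real.log (1 - b)
      = Li2 a + Li2 (1 - a) + Real.log a * Real.log (1 - a) := by
  refine const_of_deriv_zero hab ?_ (fun t ht => refl_deriv ⟨lt_of_lt_of_le ha.1 ht.1.le, lt_of_le_of_lt ht.2.le hb.2⟩)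
  have hsub : Icc a b ⊆ Ioo (0:ℝ) 1 := fun t ht => ⟨lt_of_lt_of_le ha.1 ht.1, lt_of_le_of_lt ht.2 hb.2⟩
  have hsub' : Icc a b ⊆ Icc (-1:ℝ) 1 := fun t ht => by
    have := hsub ht; exact ⟨by linarith [this.1], this.2.le⟩
  refine ((li2_continuousOn.mono hsub').add ?_).add ?_
  · refine li2_continuousOn.comp ((continuous_const.sub continuous_id).continuousOn) ?_
    intro t ht
    have := hsub ht
    exact ⟨by linarith [this.2], by linarith [this.1]⟩
  · refine ContinuousOn.mul ?_ ?_
    · exact fun t ht => (Real.continuousAt_log (ne_of_gt (hsub ht).1)).continuousWithinAt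
    · exact fun t ht => ((Real.continuousAt_log (by have h2 := hsub ht; have := h2.2; intro h; linarith : (1:ℝ) - t ≠ 0)).comp
        (by fun_prop : Continuous fun y : ℝ => 1 - y).continuousAt).continuousWithinAt

lemma li2_reflection {x : ℝ} (hx : x ∈ Ioo (0:ℝ) 1) :
    Li2 x + Li2 (1 - x) + Real.log x * Real.log (1 - x) = π ^ 2 / 6 := by
  set F : ℝ → ℝ := fun y => Li2 y + Li2 (1 - y) + Real.log y * Real.log (1 - y) with hF
  have hFx : Tendsto F (𝓝[>] (0:ℝ)) (𝓝 (F x)) := by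
    have hmem : Ioo (0:ℝ) x ∈ 𝓝[>] (0:ℝ) := Ioo_mem_nhdsGT_of_mem ⟨le_refl 0, hx.1⟩
    have heq : F =ᶠ[𝓝[>] (0:ℝ)] fun _ => F x := by
      filter_upwards [hmem] with y hy
      exact (refl_const ⟨hy.1, hy.2.trans hx.2⟩ hx hy.2).symm
    exact tendsto_const_nhds.congr' heq.symm
  have t1 : Tendsto Li2 (𝓝[>] (0:ℝ)) (𝓝 0) := by
    have hca : ContinuousAt Li2 0 :=
      li2_continuousOn.continuousAt (Icc_mem_nhds (by norm_num) (by norm_num))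
    have := hca.tendsto.mono_left (nhdsWithin_le_nhds (s := Ioi (0:ℝ)))
    rwa [li2_zero] at this
  have t2 : Tendsto (fun y : ℝ => Li2 (1 - y)) (𝓝[>] (0:ℝ)) (𝓝 (π ^ 2 / 6)) := by
    have hinner : Tendsto (fun y : ℝ => 1 - y) (𝓝[>] (0:ℝ)) (𝓝[Icc (-1:ℝ) 1] 1) := by
      rw [tendsto_nhdsWithin_iff]
      constructor
      · have : Tendsto (fun y : ℝ => 1 - y) (𝓝 (0:ℝ)) (𝓝 (1 - 0)) :=
          (continuous_const.sub continuous_id).tendsto 0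
        simpa using this.mono_left (nhdsWithin_le_nhds (s := Ioi (0:ℝ)))
      · filter_upwards [Ioo_mem_nhdsGT_of_mem (⟨le_refl 0, one_pos⟩ : (0:ℝ) ∈ Ico 0 1)] with y hy
        exact ⟨by linarith [hy.2], by linarith [hy.1]⟩
    have hcw : ContinuousWithinAt Li2 (Icc (-1:ℝ) 1) 1 :=
      li2_continuousOn 1 ⟨by norm_num, le_refl 1⟩
    have := hcw.tendsto.comp hinner
    rwa [li2_one] at this
  have t3 : Tendsto (fun y : ℝ => Real.log y * Real.log (1 - y)) (𝓝[>] (0:ℝ)) (𝓝 0) := by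
    have hg : Tendsto (fun y : ℝ => 2 * |Real.log y * y|) (𝓝[>] (0:ℝ)) (𝓝 0) := by
      have h0 := tendsto_log_mul_rpow_nhdsGT_zero (r := 1) one_pos
      simp only [Real.rpow_one] at h0
      have := (h0.abs).const_mul (2:ℝ)
      simpa using this
    refine squeeze_zero_norm' ?_ hg
    filter_upwards [Ioo_mem_nhdsGT_of_mem (⟨le_refl 0, by norm_num⟩ : (0:ℝ) ∈ Ico 0 (1/2))] with y hy
    obtain ⟨hy0, hy2⟩ := hy
    have h1y : (0:ℝ) < 1 - y := by linarith
    have habs : |Real.log (1 - y)| ≤ 2 * y := by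
      rw [abs_of_nonpos (Real.log_nonpos (by linarith) (by linarith))]
      have : -Real.log (1 - y) = Real.log (1 - y)⁻¹ := (Real.log_inv _).symm
      rw [this]
      have h2 := Real.log_le_sub_one_of_pos (inv_pos.mpr h1y)
      have h3 : (1 - y)⁻¹ - 1 = y / (1 - y) := by field_simp; ring
      have h4 : y / (1 - y) ≤ 2 * y := by
        rw [div_le_iff₀ h1y]
        nlinarith
      linarith
    rw [Real.norm_eq_abs, abs_mul]
    calc |Real.log y| * |Real.log (1 - y)| ≤ |Real.log y| * (2 * y) := by
          exact mul_le_mul_of_nonneg_left habs (abs_nonneg _)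
      _ = 2 * |Real.log y * y| := by
          rw [abs_mul, abs_of_pos hy0]; ring
  have hF6 : Tendsto F (𝓝[>] (0:ℝ)) (𝓝 (0 + π ^ 2 / 6 + 0)) := (t1.add t2).add t3
  have h := tendsto_nhds_unique hFx hF6
  have : F x = π ^ 2 / 6 := by rw [h]; ring
  exact this

lemma li2_landen {a : ℝ} (ha : a ∈ Ioo (0:ℝ) (1/2)) :
    Li2 a + Li2 (-a / (1 - a)) + (Real.log (1 - a)) ^ 2 / 2 = 0 := by
  set G : ℝ → ℝ := fun x => Li2 x + Li2 (-x / (1 - x)) + (Real.log (1 - x)) ^ 2 / 2 with hG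
  have hG0 : G 0 = 0 := by simp [hG, li2_zero]
  have key : G a = G 0 := by
    refine const_of_deriv_zero ha.1 ?_ ?_
    · -- continuity on Icc 0 a
      have hsub : ∀ t ∈ Icc (0:ℝ) a, 0 ≤ t ∧ t < 1/2 := fun t ht =>
        ⟨ht.1, lt_of_le_of_lt ht.2 ha.2⟩
      refine (ContinuousOn.add (li2_continuousOn.mono ?_) ?_).add ?_
      · intro t ht
        obtain ⟨h0, h2⟩ := hsub t ht
        exact ⟨by linarith, by linarith⟩
      · refine li2_continuousOn.comp ?_ ?_
        · refine ContinuousOn.div (continuous_id.neg.continuousOn)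
            ((continuous_const.sub continuous_id).continuousOn) ?_
          intro t ht
          obtain ⟨h0, h2⟩ := hsub t ht
          intro h
          linarith
        · intro t ht
          obtain ⟨h0, h2⟩ := hsub t ht
          have hd : (0:ℝ) < 1 - t := by linarith
          constructor
          · simp only [id]
            rw [neg_div, neg_le, neg_neg]
            rw [div_le_one hd]
            linarith
          · simp only [id]
            have : -t / (1 - t) ≤ 0 := by
              apply div_nonpos_of_nonpos_of_nonneg <;> linarith
            linarith
      · refine ContinuousOn.div_const (ContinuousOn.pow ?_ 2) 2
        intro t ht
        obtain ⟨h0, h2⟩ := hsub t ht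
        exact ((Real.continuousAt_log (by intro h; linarith : (1:ℝ) - t ≠ 0)).comp
          ((continuous_const.sub continuous_id).continuousAt)).continuousWithinAt
    · -- derivative zero on Ioo 0 a
      intro t ht
      have ht0 : 0 < t := ht.1
      have ht2 : t < 1/2 := lt_trans ht.2 ha.2
      have hd : (0:ℝ) < 1 - t := by linarith
      set u : ℝ := -t / (1 - t) with hu
      have hu_neg : u < 0 := div_neg_of_neg_of_pos (by linarith) hd
      have hu_gt : -1 < u := by
        rw [hu, neg_div, neg_lt, neg_neg, div_lt_one hd]
        linarith
      have h1 : HasDerivAt Li2 (-Real.log (1 - t) / t) t :=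
        li2_hasDerivAt (by rw [abs_lt]; constructor <;> linarith) (ne_of_gt ht0)
      have hinner : HasDerivAt (fun x : ℝ => 1 - x) (-1) t := (hasDerivAt_id t).const_sub 1
      have huder : HasDerivAt (fun x : ℝ => -x / (1 - x)) (-1 / (1 - t) ^ 2) t := by
        have hnum : HasDerivAt (fun x : ℝ => -x) (-1) t := (hasDerivAt_id t).neg
        have := hnum.div hinner (ne_of_gt hd)
        refine this.congr_deriv ?_
        field_simp
        ring
      have h2base : HasDerivAt Li2 (-Real.log (1 - u) / u) u :=
        li2_hasDerivAt (by rw [abs_lt]; constructor <;> linarith) (ne_of_lt hu_neg)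
      have h2 := h2base.comp t huder
      have hlog : HasDerivAt (fun x : ℝ => Real.log (1 - x)) ((1 - t)⁻¹ * (-1)) t :=
        (Real.hasDerivAt_log (ne_of_gt hd)).comp t hinner
      have h3 : HasDerivAt (fun x : ℝ => (Real.log (1 - x)) ^ 2 / 2)
          ((2 : ℕ) * Real.log (1 - t) ^ 1 * ((1 - t)⁻¹ * (-1)) / 2) t :=
        (hlog.pow 2).div_const 2
      have h := (h1.add h2).add h3
      refine h.congr_deriv ?_
      have h1u : 1 - u = (1 - t)⁻¹ := by rw [hu]; field_simp; ring
      rw [h1u, Real.log_inv]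
      have hu0 : u ≠ 0 := ne_of_lt hu_neg
      rw [hu]
      rw [hu] at hu0
      field_simp
      ring
  exact key.trans hG0

lemma li2_dup {s : ℝ} (hs : s ^ 2 = 1/2) (hs0 : 0 < s) :
    Li2 s + Li2 (-s) = Li2 (1/2) / 2 := by
  have hs1 : s < 1 := by nlinarith
  have habs : |s| ≤ 1 := by rw [abs_of_pos hs0]; linarith
  have habs' : |(-s)| ≤ 1 := by rw [abs_neg]; exact habs
  set f : ℕ → ℝ := fun k => s ^ (k + 1) / ((k : ℝ) + 1) ^ 2 with hf
  set g : ℕ → ℝ := fun k => (-s) ^ (k + 1) / ((k : ℝ) + 1) ^ 2 with hg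
  have hfs : HasSum f (Li2 s) := (li2_summable habs).hasSum
  have hgs : HasSum g (Li2 (-s)) := (li2_summable habs').hasSum
  have hfg : HasSum (fun k => f k + g k) (Li2 s + Li2 (-s)) := hfs.add hgs
  have hhalf : HasSum (fun m : ℕ => (1/2 : ℝ) ^ (m + 1) / ((m : ℝ) + 1) ^ 2) (Li2 (1/2)) :=
    (li2_summable (by rw [abs_of_pos]; norm_num; norm_num)).hasSum
  have hhalf2 := hhalf.div_const 2
  set i : ℕ → ℕ := fun m => 2 * m + 1 with hi
  have hinj : Function.Injective i := fun m n h => by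
    simp only [hi] at h; omega
  have hvanish : ∀ k ∉ Set.range i, f k + g k = 0 := by
    intro k hk
    have hkeven : Even k := by
      rcases Nat.even_or_odd k with h | h
      · exact h
      · exfalso
        obtain ⟨m, hm⟩ := h
        exact hk ⟨m, hm.symm⟩
    have hodd : Odd (k + 1) := Even.add_one hkeven
    have : (-s) ^ (k + 1) = -(s ^ (k + 1)) := hodd.neg_pow s
    simp only [hf, hg, this]
    ring
  have hcomp : HasSum ((fun k => f k + g k) ∘ i) (Li2 (1/2) / 2) := by
    refine hhalf2.congr_fun fun m => ?_
    simp only [Function.comp, hf, hg, hi]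
    have heven : Even (2 * m + 1 + 1) := ⟨m + 1, by ring⟩
    have h1 : (-s) ^ (2 * m + 1 + 1) = s ^ (2 * m + 1 + 1) := heven.neg_pow s
    have h2 : s ^ (2 * m + 1 + 1) = (1/2 : ℝ) ^ (m + 1) := by
      rw [show 2 * m + 1 + 1 = 2 * (m + 1) by ring, pow_mul, hs]
    rw [h1, h2]
    have h3 : ((2 * m + 1 : ℕ) : ℝ) + 1 = 2 * ((m : ℝ) + 1) := by push_cast; ring
    rw [h3]
    have hm1 : ((m : ℝ) + 1) ≠ 0 := by positivity
    field_simp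
    ring
  have := (hinj.hasSum_iff hvanish).mp hcomp
  exact hfg.unique this

/-- A dilogarithm identity. -/
theorem dilog_identity :
    Li2 (2 - Real.sqrt 2) + Li2 (1 / Real.sqrt 2) - Li2 (Real.sqrt 2 - 1)
      - Li2 (1 - 1 / Real.sqrt 2) = Real.pi ^ 2 / 12 := by
  set r : ℝ := Real.sqrt 2 with hrdef
  have hr2 : r ^ 2 = 2 := Real.sq_sqrt (by norm_num)
  have hr0 : 0 < r := Real.sqrt_pos.mpr (by norm_num)
  have hr1 : 1 < r := by nlinarith
  have hr15 : r < 3/2 := by nlinarith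
  have hrne : r ≠ 0 := ne_of_gt hr0
  have hr1ne : r - 1 ≠ 0 := by intro h; nlinarith
  have h2rne : (2:ℝ) - r ≠ 0 := by intro h; nlinarith
  -- reflection at 2 - r
  have h1 := li2_reflection (x := 2 - r) ⟨by linarith, by linarith⟩
  rw [show (1:ℝ) - (2 - r) = r - 1 by ring] at h1
  -- reflection at 1/r
  have h2 := li2_reflection (x := 1 / r) ⟨by positivity, by rw [div_lt_one hr0]; exact hr1⟩
  -- reflection at 1/2
  have h3 := li2_reflection (x := (1/2 : ℝ)) ⟨by norm_num, by norm_num⟩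
  rw [show (1:ℝ) - 1/2 = 1/2 by norm_num] at h3
  -- Landen at r - 1
  have h4 := li2_landen (a := r - 1) ⟨by linarith, by linarith⟩
  rw [show (1:ℝ) - (r - 1) = 2 - r by ring] at h4
  rw [show -(r - 1) / (2 - r) = -(1 / r) by
    field_simp
    nlinarith] at h4
  -- duplication at 1/r
  have h5 := li2_dup (s := 1 / r) (by field_simp; linarith [hr2]) (by positivity)
  -- log identities
  have e1 : Real.log (2 - r) = Real.log r + Real.log (r - 1) := by
    rw [show (2:ℝ) - r = r * (r - 1) by nlinarith]
    exact Real.log_mul hrne hr1ne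
  have e2 : Real.log (1 / r) = -Real.log r := by
    rw [one_div, Real.log_inv]
  have e3 : Real.log (1 - 1 / r) = Real.log (r - 1) - Real.log r := by
    rw [show (1:ℝ) - 1 / r = (r - 1) / r by field_simp]
    exact Real.log_div hr1ne hrne
  have e4 : Real.log r = Real.log 2 / 2 := Real.log_sqrt (by norm_num)
  have e5 : Real.log (1/2 : ℝ) = -Real.log 2 := by
    rw [one_div, Real.log_inv]
  rw [e1, e4] at h1
  rw [e2, e3, e4] at h2
  rw [e5] at h3
  rw [e1, e4] at h4
  linear_combination h1 - h2 + h3/2 - 2*h4 + 2*h5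
end
end

section
/- The total integral of the return time function over the Poincaré section Ω equals 3π²/4, the covolume of the Veech group Γ. Explicitly: 2·∫₀¹ (∫_{1−x}^1 1/(xy) dy) dx + ∫₀^{√2−1} (∫_{1−(1+√2)x}^{1−x} 1/(x(x+y)) dy) dx + ∫_{√2−1}^{1} (∫_{(1−(1+√2)x)/√2}^{1−x} 1/(x(x+y)) dy) dx + ∫_{√2−1}^{1} (∫_{1−(1+√2)x}^{(1−(1+√2)x)/√2} √2/(x((1+√2)x+√2·y)) dy) dx + ∫₀^{1} (∫_{1−(2+√2)x}^{1−(1+√2)x} 1/(x((1+√2)x+y)) dy) dx = 3π²/4. -/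
open Real MeasureTheory intervalIntegral

noncomputable section

namespace TRT

open Set Filter Topology


/-- The dilogarithm integrand. -/
def f (t : ℝ) : ℝ := -Real.log (1 - t) / t

/-- The dilogarithm. -/
def Li (x : ℝ) : ℝ := ∫ t in (0:ℝ)..x, f t

lemma f_meas : Measurable f :=
  (Real.measurable_log.comp (measurable_const.sub measurable_id)).neg.div measurable_id

lemma neg_log_le {u : ℝ} (hu : 0 < u) (hu1 : u ≤ 1) : -Real.log u ≤ 2 / Real.sqrt u := by
  have hs : 0 < Real.sqrt u := Real.sqrt_pos.2 hu
  have h1 : Real.log (Real.sqrt u)⁻¹ ≤ (Real.sqrt u)⁻¹ - 1 :=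
    Real.log_le_sub_one_of_pos (inv_pos.2 hs)
  have h2 : Real.log u = 2 * Real.log (Real.sqrt u) := by
    rw [Real.log_sqrt hu.le]; ring
  rw [Real.log_inv] at h1
  have : -Real.log u ≤ 2 * ((Real.sqrt u)⁻¹ - 1) := by rw [h2]; linarith
  rw [div_eq_mul_inv]
  nlinarith [hs]

lemma f_bound {t : ℝ} (ht : t ∈ Icc (-1:ℝ) 1) : ‖f t‖ ≤ 2 + 4 / Real.sqrt (1 - t) := by
  obtain ⟨h1, h2⟩ := ht
  have hs : 0 ≤ 4 / Real.sqrt (1 - t) := by positivity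
  rw [Real.norm_eq_abs]
  rcases lt_trichotomy t 0 with hneg | hzero | hpos
  · -- t < 0 : 0 ≤ log (1-t) ≤ -t
    have hlog1 : Real.log (1 - t) ≤ -t := by
      have := Real.log_le_sub_one_of_pos (by linarith : (0:ℝ) < 1 - t)
      linarith
    have hlog0 : 0 ≤ Real.log (1 - t) := Real.log_nonneg (by linarith)
    have : |f t| ≤ 1 := by
      rw [f, abs_div, abs_neg]
      rw [abs_of_nonneg hlog0, abs_of_neg hneg]
      rw [div_le_one (by linarith)]
      linarith
    linarith
  · simp [f, hzero]
    positivity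
  · rcases le_total t (1/2) with hhalf | hhalf
    · -- 0 < t ≤ 1/2 : -log(1-t) ≤ 2t
      have hpos1 : (0:ℝ) < 1 - t := by linarith
      have hlog1 : -Real.log (1 - t) ≤ 2 * t := by
        have := Real.log_le_sub_one_of_pos (inv_pos.2 hpos1)
        rw [Real.log_inv] at this
        have h3 : (1 - t)⁻¹ - 1 = t / (1 - t) := by field_simp; ring
        have h4 : t / (1 - t) ≤ 2 * t := by
          rw [div_le_iff₀ hpos1]; nlinarith
        linarith
      have hlog0 : Real.log (1 - t) ≤ 0 := Real.log_nonpos (by linarith) (by linarith)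
      have : |f t| ≤ 2 := by
        rw [f, abs_div, abs_neg, abs_of_nonpos hlog0, abs_of_pos hpos]
        rw [div_le_iff₀ hpos]
        nlinarith
      linarith
    · -- 1/2 ≤ t ≤ 1
      rcases eq_or_lt_of_le h2 with h2 | h2
      · simp [f, ← h2]
      have hpos1 : (0:ℝ) < 1 - t := by linarith
      have hlog0 : Real.log (1 - t) ≤ 0 := Real.log_nonpos (by linarith) (by linarith)
      have hlog1 : -Real.log (1 - t) ≤ 2 / Real.sqrt (1 - t) :=
        neg_log_le hpos1 (by linarith)
      have h5 : |f t| ≤ 2 * (2 / Real.sqrt (1 - t)) := by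
        rw [f, abs_div, abs_neg, abs_of_nonpos hlog0, abs_of_pos hpos]
        rw [div_le_iff₀ hpos]
        have hsn : 0 ≤ 2 / Real.sqrt (1 - t) := by positivity
        nlinarith
      have : 2 * (2 / Real.sqrt (1 - t)) = 4 / Real.sqrt (1 - t) := by ring
      linarith [this ▸ h5]

lemma g_intOn : IntegrableOn (fun t : ℝ => 2 + 4 / Real.sqrt (1 - t)) (Icc (-1:ℝ) 1) := by
  apply Integrable.add
  · exact integrableOn_const (by simp)
  · have h0 : IntervalIntegrable (fun x : ℝ => x ^ (-(1/2) : ℝ)) volume 0 2 :=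
      intervalIntegrable_rpow' (by norm_num)
    have h1 : IntervalIntegrable (fun x : ℝ => ((1:ℝ) - x) ^ (-(1/2) : ℝ)) volume (-1) 1 := by
      have h := (h0.comp_sub_left 1).symm
      have e1 : (1:ℝ) - 2 = -1 := by norm_num
      have e2 : (1:ℝ) - 0 = 1 := by norm_num
      rwa [e1, e2] at h
    have h2 : IntegrableOn (fun x : ℝ => ((1:ℝ) - x) ^ (-(1/2) : ℝ)) (Icc (-1:ℝ) 1) := by
      rw [integrableOn_Icc_iff_integrableOn_Ioc]
      exact h1.1
    have h3 : IntegrableOn (fun x : ℝ => 4 * ((1:ℝ) - x) ^ (-(1/2) : ℝ)) (Icc (-1:ℝ) 1) :=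
      h2.const_mul 4
    apply h3.congr_fun _ measurableSet_Icc
    intro x hx
    have hx1 : (0:ℝ) ≤ 1 - x := by linarith [hx.2]
    show 4 * ((1:ℝ) - x) ^ (-(1/2) : ℝ) = 4 / Real.sqrt (1 - x)
    rw [Real.rpow_neg hx1, ← Real.sqrt_eq_rpow]
    ring

lemma f_intOn : IntegrableOn f (Icc (-1:ℝ) 1) := by
  apply g_intOn.mono' (f_meas.aestronglyMeasurable.restrict)
  exact (ae_restrict_iff' measurableSet_Icc).2 (Filter.Eventually.of_forall fun t ht => f_bound ht)

lemma f_ii {c d : ℝ} (hc : c ∈ Icc (-1:ℝ) 1) (hd : d ∈ Icc (-1:ℝ) 1) :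
    IntervalIntegrable f volume c d :=
  (f_intOn.mono_set (uIcc_subset_Icc hc hd)).intervalIntegrable

lemma sqrt2_mem : Real.sqrt 2 - 1 ∈ Icc (-1:ℝ) 1 := by
  have h1 : (1:ℝ) < Real.sqrt 2 := by
    nlinarith [Real.sq_sqrt (by norm_num : (2:ℝ) ≥ 0), Real.sqrt_nonneg 2]
  have h2 : Real.sqrt 2 < 2 := by
    nlinarith [Real.sq_sqrt (by norm_num : (2:ℝ) ≥ 0), Real.sqrt_nonneg 2]
  constructor <;> [linarith; linarith]

lemma Li_cont : ContinuousOn Li (Icc (-1:ℝ) 1) := by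
  have hmem : (0:ℝ) ∈ Set.uIcc (-1:ℝ) 1 := by
    rw [Set.uIcc_of_le (by norm_num : (-1:ℝ) ≤ 1)]
    norm_num
  have h : ContinuousOn (fun b => ∫ x in (0:ℝ)..b, f x) (Set.uIcc (-1:ℝ) 1) :=
    intervalIntegral.continuousOn_primitive_interval'
      (f_ii (by norm_num) (by norm_num)) hmem
  rwa [Set.uIcc_of_le (by norm_num : (-1:ℝ) ≤ 1)] at h

lemma f_contAt {x : ℝ} (hx2 : x < 1) (hx0 : x ≠ 0) : ContinuousAt f x := by
  have h1 : ContinuousAt (fun t : ℝ => Real.log (1 - t)) x :=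
    (Real.continuousAt_log (by linarith : (1:ℝ) - x ≠ 0)).comp
      ((continuous_const.sub continuous_id).continuousAt)
  exact h1.neg.div continuousAt_id hx0

lemma Li_deriv {x : ℝ} (hx1 : -1 ≤ x) (hx2 : x < 1) (hx0 : x ≠ 0) :
    HasDerivAt Li (f x) x := by
  apply intervalIntegral.integral_hasDerivAt_right
    (f_ii (by norm_num) ⟨hx1, hx2.le⟩)
    ⟨univ, univ_mem, f_meas.aestronglyMeasurable.restrict⟩
    (f_contAt hx2 hx0)

lemma Li_zero : Li 0 = 0 := intervalIntegral.integral_same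



lemma hasSum_inv_sq : HasSum (fun n : ℕ => 1 / ((n:ℝ)+1)^2) (π^2/6) := by
  have h := hasSum_zeta_two
  rw [← hasSum_nat_add_iff' 1] at h
  simpa using h

lemma hasSum_alt : HasSum (fun n : ℕ => (-1:ℝ)^n / ((n:ℝ)+1)^2) (π^2/12) := by
  have hg := hasSum_inv_sq
  have hodd : HasSum (fun n : ℕ => if Odd n then 1/((n:ℝ)+1)^2 else 0) (π^2/24) := by
    have hinj : Function.Injective (fun k : ℕ => 2*k+1) := by intro a b h; simp only at h; omega
    rw [← Function.Injective.hasSum_iff hinj ?_]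
    · have h4 := hg.mul_left (1/4)
      have : (fun k : ℕ => (if Odd (2*k+1) then 1/(((2*k+1:ℕ):ℝ)+1)^2 else 0))
          = fun k : ℕ => (1/4) * (1/((k:ℝ)+1)^2) := by
        funext k
        rw [if_pos ⟨k, by ring⟩]
        push_cast
        field_simp
        ring
      rw [show ((fun n : ℕ => if Odd n then 1/((n:ℝ)+1)^2 else 0) ∘ (fun k : ℕ => 2*k+1))
          = fun k : ℕ => (if Odd (2*k+1) then 1/(((2*k+1:ℕ):ℝ)+1)^2 else 0) by
        funext k; rfl]
      rw [this]
      rw [show π^2/24 = 1/4*(π^2/6) by ring]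
      exact h4
    · intro x hx
      have : ¬ Odd x := by
        intro ⟨m, hm⟩
        exact hx ⟨m, by simp only; omega⟩
      simp [this]
  have hcomb := hg.sub (hodd.mul_left 2)
  have : (fun n : ℕ => 1/((n:ℝ)+1)^2 - 2 * (if Odd n then 1/((n:ℝ)+1)^2 else 0))
      = fun n : ℕ => (-1:ℝ)^n / ((n:ℝ)+1)^2 := by
    funext n
    rcases Nat.even_or_odd n with he | ho
    · rw [if_neg (by simpa [Nat.not_odd_iff_even] using he), he.neg_one_pow]
      ring
    · rw [if_pos ho, ho.neg_one_pow]
      ring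
  rw [this] at hcomb
  rw [show π^2/12 = π^2/6 - 2*(π^2/24) by ring]
  exact hcomb




lemma f_eq_tsum {t : ℝ} (h1 : |t| < 1) (h0 : t ≠ 0) :
    f t = ∑' n : ℕ, t ^ n / ((n:ℝ) + 1) := by
  have hs := Real.hasSum_pow_div_log_of_abs_lt_one h1
  have hs2 := hs.div_const t
  have he : (fun n : ℕ => t ^ (n+1) / ((n:ℝ)+1) / t) = fun n : ℕ => t ^ n / ((n:ℝ)+1) := by
    funext n
    rw [pow_succ]
    field_simp
  rw [he] at hs2
  rw [f, div_eq_mul_inv, ← div_eq_mul_inv, ← hs2.tsum_eq]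

lemma term_intOn (n : ℕ) {a b : ℝ} :
    IntegrableOn (fun t : ℝ => t ^ n / ((n:ℝ)+1)) (Ioo a b) :=
  (((continuous_pow n).div_const _).integrableOn_Icc).mono_set Ioo_subset_Icc_self

lemma term_lint (n : ℕ) {a b : ℝ} (hn : ∫ t in Ioo a b, ‖t ^ n / ((n:ℝ)+1)‖ = 1/((n:ℝ)+1)^2) :
    (∫⁻ t in Ioo a b, ‖t ^ n / ((n:ℝ)+1)‖₊) = ENNReal.ofReal (1/((n:ℝ)+1)^2) := by
  have := MeasureTheory.ofReal_integral_norm_eq_lintegral_enorm (term_intOn n (a := a) (b := b)); rw [hn] at this; exact this.symm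

lemma tsum_lint_ne_top {a b : ℝ}
    (h : ∀ n : ℕ, (∫⁻ t in Ioo a b, ‖t ^ n / ((n:ℝ)+1)‖₊) = ENNReal.ofReal (1/((n:ℝ)+1)^2)) :
    (∑' n : ℕ, ∫⁻ t in Ioo a b, ‖t ^ n / ((n:ℝ)+1)‖₊) ≠ ⊤ := by
  rw [tsum_congr h, ← ENNReal.ofReal_tsum_of_nonneg (fun n => by positivity)
    hasSum_inv_sq.summable]
  exact ENNReal.ofReal_ne_top

lemma J1 (n : ℕ) : ∫ t in Ioo (0:ℝ) 1, t ^ n = 1/((n:ℝ)+1) := by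
  rw [← integral_Ioc_eq_integral_Ioo, ← intervalIntegral.integral_of_le zero_le_one,
    integral_pow]
  push_cast
  rw [one_pow, zero_pow (Nat.succ_ne_zero n)]
  ring

lemma J2 (n : ℕ) : ∫ t in Ioo (-1:ℝ) 0, t ^ n = (-1:ℝ)^n/((n:ℝ)+1) := by
  rw [← integral_Ioc_eq_integral_Ioo,
    ← intervalIntegral.integral_of_le (by norm_num : (-1:ℝ) ≤ 0), integral_pow]
  push_cast
  rw [zero_pow (Nat.succ_ne_zero n), pow_succ]
  ring

lemma Li_one : Li 1 = π^2/6 := by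
  have h1 : Li 1 = ∫ t in Ioo (0:ℝ) 1, f t := by
    rw [Li, intervalIntegral.integral_of_le zero_le_one, integral_Ioc_eq_integral_Ioo]
  have h2 : ∫ t in Ioo (0:ℝ) 1, f t
      = ∫ t in Ioo (0:ℝ) 1, ∑' n : ℕ, t ^ n / ((n:ℝ)+1) := by
    apply setIntegral_congr_fun measurableSet_Ioo
    intro t ht
    exact f_eq_tsum (by rw [abs_of_pos ht.1]; exact ht.2) (ne_of_gt ht.1)
  have hval : ∀ n : ℕ, (∫ t in Ioo (0:ℝ) 1, t ^ n / ((n:ℝ)+1)) = 1/((n:ℝ)+1)^2 := by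
    intro n
    rw [MeasureTheory.integral_div, J1]
    field_simp
  have hnorm : ∀ n : ℕ, (∫ t in Ioo (0:ℝ) 1, ‖t ^ n / ((n:ℝ)+1)‖) = 1/((n:ℝ)+1)^2 := by
    intro n
    rw [← hval n]
    apply setIntegral_congr_fun measurableSet_Ioo
    intro t ht
    show ‖t ^ n / ((n:ℝ)+1)‖ = t ^ n / ((n:ℝ)+1)
    rw [Real.norm_eq_abs, abs_of_nonneg (div_nonneg (pow_nonneg ht.1.le n) (by positivity))]
  have h3 : ∫ t in Ioo (0:ℝ) 1, ∑' n : ℕ, t ^ n / ((n:ℝ)+1)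
      = ∑' n : ℕ, ∫ t in Ioo (0:ℝ) 1, t ^ n / ((n:ℝ)+1) :=
    integral_tsum (fun n => ((continuous_pow n).div_const _).aestronglyMeasurable)
      (tsum_lint_ne_top (fun n => term_lint n (hnorm n)))
  rw [h1, h2, h3, tsum_congr hval, hasSum_inv_sq.tsum_eq]

lemma Li_neg_one : Li (-1) = -(π^2/12) := by
  have h1 : Li (-1) = -∫ t in Ioo (-1:ℝ) 0, f t := by
    rw [Li, intervalIntegral.integral_symm,
      intervalIntegral.integral_of_le (by norm_num : (-1:ℝ) ≤ 0),
      integral_Ioc_eq_integral_Ioo]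
  have h2 : ∫ t in Ioo (-1:ℝ) 0, f t
      = ∫ t in Ioo (-1:ℝ) 0, ∑' n : ℕ, t ^ n / ((n:ℝ)+1) := by
    apply setIntegral_congr_fun measurableSet_Ioo
    intro t ht
    exact f_eq_tsum (abs_lt.2 ⟨ht.1, by linarith [ht.2]⟩) (ne_of_lt ht.2)
  have hval : ∀ n : ℕ, (∫ t in Ioo (-1:ℝ) 0, t ^ n / ((n:ℝ)+1)) = (-1:ℝ)^n/((n:ℝ)+1)^2 := by
    intro n
    rw [MeasureTheory.integral_div, J2]
    field_simp
  have hnorm : ∀ n : ℕ, (∫ t in Ioo (-1:ℝ) 0, ‖t ^ n / ((n:ℝ)+1)‖) = 1/((n:ℝ)+1)^2 := by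
    intro n
    have habs : ∀ t ∈ Ioo (-1:ℝ) 0, ‖t ^ n / ((n:ℝ)+1)‖ = ((-1:ℝ)^n * t ^ n) / ((n:ℝ)+1) := by
      intro t ht
      rw [Real.norm_eq_abs, abs_div, abs_of_nonneg (by positivity : (0:ℝ) ≤ (n:ℝ)+1),
        abs_pow, abs_of_neg ht.2, ← neg_one_mul, mul_pow]
    rw [setIntegral_congr_fun measurableSet_Ioo habs]
    simp_rw [mul_div_assoc]
    rw [MeasureTheory.integral_const_mul, MeasureTheory.integral_div, J2]
    rw [div_div, ← sq, ← mul_div_assoc, ← mul_pow]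
    norm_num
  have h3 : ∫ t in Ioo (-1:ℝ) 0, ∑' n : ℕ, t ^ n / ((n:ℝ)+1)
      = ∑' n : ℕ, ∫ t in Ioo (-1:ℝ) 0, t ^ n / ((n:ℝ)+1) :=
    integral_tsum (fun n => ((continuous_pow n).div_const _).aestronglyMeasurable)
      (tsum_lint_ne_top (fun n => term_lint n (hnorm n)))
  rw [h1, h2, h3, tsum_congr hval, hasSum_alt.tsum_eq]



lemma const_on_open {φ : ℝ → ℝ} {a b : ℝ}
    (hd : ∀ x ∈ Ioo a b, HasDerivAt φ 0 x) :
    ∀ x ∈ Ioo a b, ∀ y ∈ Ioo a b, φ x = φ y := by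
  have key : ∀ x ∈ Ioo a b, ∀ y ∈ Ioo a b, x ≤ y → φ x = φ y := by
    intro x hx y hy hxy
    have hcont : ContinuousOn φ (Icc x y) := by
      intro z hz
      exact (hd z ⟨lt_of_lt_of_le hx.1 hz.1, lt_of_le_of_lt hz.2 hy.2⟩).continuousAt.continuousWithinAt
    have hder : ∀ z ∈ Ico x y, HasDerivWithinAt φ 0 (Ici z) z := fun z hz =>
      (hd z ⟨lt_of_lt_of_le hx.1 hz.1, lt_trans hz.2 hy.2⟩).hasDerivWithinAt
    exact (constant_of_has_deriv_right_zero hcont hder y (right_mem_Icc.2 hxy)).symm ▸ rfl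
  intro x hx y hy
  rcases le_total x y with h | h
  · exact key x hx y hy h
  · exact (key y hy x hx h).symm

lemma log_log_lim : Tendsto (fun x : ℝ => Real.log x * Real.log (1 - x)) (𝓝[<] (1:ℝ)) (𝓝 0) := by
  have hu : Tendsto (fun x : ℝ => 1 - x) (𝓝[<] (1:ℝ)) (𝓝[>] (0:ℝ)) := by
    apply tendsto_nhdsWithin_of_tendsto_nhds_of_eventually_within
    · have h : Tendsto (fun x : ℝ => 1 - x) (𝓝 (1:ℝ)) (𝓝 (0:ℝ)) := by
        have h0 : Continuous (fun x : ℝ => 1 - x) := by continuity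
        have := h0.tendsto (1:ℝ)
        simpa using this
      exact h.mono_left nhdsWithin_le_nhds
    · filter_upwards [self_mem_nhdsWithin] with x hx
      simp only [mem_Iio] at hx
      exact mem_Ioi.2 (by linarith)
  have hml : Tendsto (fun u : ℝ => Real.log u * u) (𝓝[>] (0:ℝ)) (𝓝 0) := by
    have := tendsto_log_mul_rpow_nhdsGT_zero zero_lt_one
    simpa [Real.rpow_one] using this
  have hB : Tendsto (fun x : ℝ => Real.log (1-x) * (1-x)) (𝓝[<] (1:ℝ)) (𝓝 0) := hml.comp hu
  have hB2 : Tendsto (fun x : ℝ => 2 * ‖Real.log (1-x) * (1-x)‖) (𝓝[<] (1:ℝ)) (𝓝 0) := by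
    have := hB.norm.const_mul 2
    simpa using this
  apply squeeze_zero_norm' _ hB2
  filter_upwards [Ioo_mem_nhdsLT_of_mem (⟨by norm_num, le_refl (1:ℝ)⟩ : (1:ℝ) ∈ Ioc (1/2) 1)]
    with x hx
  obtain ⟨hx1, hx2⟩ := hx
  have hx0 : (0:ℝ) < x := by linarith
  have h1x : (0:ℝ) < 1 - x := by linarith
  have hlx : -Real.log x ≤ 2*(1-x) := by
    have h := Real.log_le_sub_one_of_pos (inv_pos.2 hx0)
    rw [Real.log_inv] at h
    have h2 : x⁻¹ - 1 = (1-x)/x := by field_simp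
    rw [h2] at h
    have h3 : (1-x)/x ≤ 2*(1-x) := by
      rw [div_le_iff₀ hx0]
      nlinarith
    linarith
  have hlogx : Real.log x ≤ 0 := Real.log_nonpos hx0.le (by linarith)
  have hlog1x : 0 ≤ -Real.log x := by linarith
  rw [norm_mul, Real.norm_eq_abs, Real.norm_eq_abs, Real.norm_eq_abs (Real.log (1-x) * (1-x)),
    abs_mul, abs_of_pos h1x, abs_of_nonpos hlogx]
  calc -Real.log x * |Real.log (1-x)| ≤ 2*(1-x) * |Real.log (1-x)| := by
        apply mul_le_mul_of_nonneg_right hlx (abs_nonneg _)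
    _ = 2 * (|Real.log (1-x)| * (1-x)) := by ring

lemma refl_deriv {z : ℝ} (hz : z ∈ Ioo (0:ℝ) 1) :
    HasDerivAt (fun x => Li x + Li (1-x) + Real.log x * Real.log (1-x)) 0 z := by
  obtain ⟨hz0, hz1⟩ := hz
  have h1z : (0:ℝ) < 1 - z := by linarith
  have hA : HasDerivAt Li (f z) z := Li_deriv (by linarith) hz1 (ne_of_gt hz0)
  have hin : HasDerivAt (fun x : ℝ => 1 - x) (-1) z := by
    simpa using (hasDerivAt_id z).const_sub 1
  have hB : HasDerivAt (fun x => Li (1-x)) (f (1-z) * (-1)) z :=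
    (Li_deriv (by linarith) (by linarith) (ne_of_gt h1z)).comp z hin
  have hC1 : HasDerivAt (fun x : ℝ => Real.log x) z⁻¹ z := Real.hasDerivAt_log (ne_of_gt hz0)
  have hC2 : HasDerivAt (fun x : ℝ => Real.log (1-x)) ((1-z)⁻¹ * (-1)) z :=
    (Real.hasDerivAt_log (ne_of_gt h1z)).comp z hin
  have hC := hC1.mul hC2
  have htot := (hA.add hB).add hC
  have heq : f z + f (1-z) * (-1) + (z⁻¹ * Real.log (1-z) + Real.log z * ((1-z)⁻¹ * (-1))) = 0 := by
    simp only [f]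
    rw [show (1:ℝ) - (1 - z) = z by ring]
    field_simp
    ring
  rwa [heq] at htot

lemma reflection : ∀ x ∈ Ioo (0:ℝ) 1,
    Li x + Li (1-x) + Real.log x * Real.log (1-x) = π^2/6 := by
  set φ := fun x => Li x + Li (1-x) + Real.log x * Real.log (1-x) with hφ
  have hconst := const_on_open (fun z hz => refl_deriv hz)
  intro x hx
  have hmemF : Ioo (0:ℝ) 1 ∈ 𝓝[<] (1:ℝ) :=
    Ioo_mem_nhdsLT_of_mem ⟨zero_lt_one, le_refl 1⟩
  haveI : (𝓝[<] (1:ℝ)).NeBot := inferInstance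
  -- φ tends to π²/6 along 𝓝[<] 1
  have hLi1 : Tendsto Li (𝓝[<] (1:ℝ)) (𝓝 (Li 1)) := by
    have h1 : Tendsto Li (𝓝[Ioo (0:ℝ) 1] (1:ℝ)) (𝓝 (Li 1)) :=
      Tendsto.comp (Li_cont 1 ⟨by norm_num, le_refl 1⟩)
        (tendsto_nhdsWithin_mono_left (Ioo_subset_Icc_self.trans
          (Icc_subset_Icc (by norm_num) (le_refl 1))) Filter.tendsto_id)
    rwa [nhdsWithin_Ioo_eq_nhdsLT zero_lt_one] at h1
  have hLi0 : Tendsto (fun x => Li (1-x)) (𝓝[<] (1:ℝ)) (𝓝 0) := by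
    have hc0 : ContinuousAt Li 0 :=
      Li_cont.continuousAt (Icc_mem_nhds (by norm_num) (by norm_num))
    have hmap : Tendsto (fun x : ℝ => 1 - x) (𝓝[<] (1:ℝ)) (𝓝 (0:ℝ)) := by
      have h : Tendsto (fun x : ℝ => 1 - x) (𝓝 (1:ℝ)) (𝓝 (0:ℝ)) := by
        have h0 : Continuous (fun x : ℝ => 1 - x) := by continuity
        have := h0.tendsto (1:ℝ)
        simpa using this
      exact h.mono_left nhdsWithin_le_nhds
    have := hc0.tendsto.comp hmap
    rwa [Li_zero] at this
  have hφlim : Tendsto φ (𝓝[<] (1:ℝ)) (𝓝 (Li 1 + 0 + 0)) :=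
    (hLi1.add hLi0).add log_log_lim
  have hφconst : Tendsto φ (𝓝[<] (1:ℝ)) (𝓝 (φ x)) := by
    apply Tendsto.congr' _ tendsto_const_nhds
    filter_upwards [hmemF] with y hy
    exact hconst x hx y hy
  have heq := tendsto_nhds_unique hφconst hφlim
  show φ x = π^2/6
  rw [heq, Li_one]
  ring



lemma tendsto_Li_one : Tendsto Li (𝓝[<] (1:ℝ)) (𝓝 (Li 1)) := by
  have h1 : Tendsto Li (𝓝[Ioo (0:ℝ) 1] (1:ℝ)) (𝓝 (Li 1)) :=
    Tendsto.comp (Li_cont 1 ⟨by norm_num, le_refl 1⟩)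
      (tendsto_nhdsWithin_mono_left (Ioo_subset_Icc_self.trans
        (Icc_subset_Icc (by norm_num) (le_refl 1))) Filter.tendsto_id)
  rwa [nhdsWithin_Ioo_eq_nhdsLT zero_lt_one] at h1

lemma hasDerivAt_D {x : ℝ} (hx1 : -1 < x) (hx2 : x < 1) (hx0 : x ≠ 0) :
    HasDerivAt (fun y => Li y - Li (-y)) ((Real.log (1+x) - Real.log (1-x))/x) x := by
  have hA := Li_deriv hx1.le hx2 hx0
  have hneg : HasDerivAt (fun y : ℝ => -y) (-1) x := by simpa using (hasDerivAt_id x).fun_neg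
  have hB : HasDerivAt (fun y => Li (-y)) (f (-x) * (-1)) x :=
    (Li_deriv (by linarith) (by linarith) (neg_ne_zero.2 hx0)).comp x hneg
  have htot := hA.sub hB
  have heq : f x - f (-x) * (-1) = (Real.log (1+x) - Real.log (1-x))/x := by
    simp only [f]
    rw [show (1:ℝ) - (-x) = 1 + x by ring]
    field_simp
    ring
  rwa [heq] at htot

lemma sqrt2_gt_one : (1:ℝ) < Real.sqrt 2 := by
  nlinarith [Real.sq_sqrt (by norm_num : (0:ℝ) ≤ 2), Real.sqrt_nonneg 2]

lemma sqrt2_lt_two : Real.sqrt 2 < 2 := by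
  nlinarith [Real.sq_sqrt (by norm_num : (0:ℝ) ≤ 2), Real.sqrt_nonneg 2]

lemma fixed_point : Li (Real.sqrt 2 - 1) - Li (-(Real.sqrt 2 - 1))
    = π^2/8 - (Real.log (Real.sqrt 2 - 1))^2/2 := by
  set v : ℝ → ℝ := fun x => 2*(1+x)⁻¹ - 1 with hv
  set φ : ℝ → ℝ := fun x => (Li x - Li (-x)) + (Li (v x) - Li (-(v x)))
      - Real.log x * (Real.log (1+x) - Real.log (1-x)) with hφ
  have hder : ∀ z ∈ Ioo (0:ℝ) 1, HasDerivAt φ 0 z := by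
    rintro z ⟨hz0, hz1⟩
    have h1z : (0:ℝ) < 1 - z := by linarith
    have h1z' : (0:ℝ) < 1 + z := by linarith
    have hvz_eq : v z = (1-z)/(1+z) := by
      simp only [hv]; field_simp; ring
    have hv0 : 0 < v z := by rw [hvz_eq]; positivity
    have hv1 : v z < 1 := by
      rw [hvz_eq, div_lt_one h1z']; linarith
    have hvd : HasDerivAt v (2 * (-1/(1+z)^2)) z := by
      have hinv : HasDerivAt (fun x : ℝ => (1+x)⁻¹) (-1/(1+z)^2) z := by
        have h := ((hasDerivAt_id z).const_add 1).fun_inv (ne_of_gt h1z')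
        simpa using h
      exact (hinv.const_mul 2).sub_const 1
    have hD1 := hasDerivAt_D (by linarith) hz1 (ne_of_gt hz0)
    have hD2 : HasDerivAt (fun x => Li (v x) - Li (-(v x)))
        (((Real.log (1 + v z) - Real.log (1 - v z))/(v z)) * (2 * (-1/(1+z)^2))) z :=
      (hasDerivAt_D (by linarith) hv1 (ne_of_gt hv0)).comp z hvd
    have hC1 : HasDerivAt (fun x : ℝ => Real.log x) z⁻¹ z := Real.hasDerivAt_log (ne_of_gt hz0)
    have hC2a : HasDerivAt (fun x : ℝ => Real.log (1+x)) ((1+z)⁻¹ * 1) z :=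
      (Real.hasDerivAt_log (ne_of_gt h1z')).comp z ((hasDerivAt_id z).const_add 1)
    have hC2b : HasDerivAt (fun x : ℝ => Real.log (1-x)) ((1-z)⁻¹ * (-1)) z :=
      (Real.hasDerivAt_log (ne_of_gt h1z)).comp z (by simpa using (hasDerivAt_id z).const_sub 1)
    have hC := hC1.mul (hC2a.sub hC2b)
    have htot := (hD1.add hD2).sub hC
    have hlog1 : Real.log (1 + v z) = Real.log 2 - Real.log (1+z) := by
      have he : 1 + v z = 2 * (1+z)⁻¹ := by simp only [hv]; ring
      rw [he, Real.log_mul two_ne_zero (inv_ne_zero (ne_of_gt h1z')), Real.log_inv]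
      ring
    have hlog2 : Real.log (1 - v z) = Real.log 2 + Real.log z - Real.log (1+z) := by
      have he : 1 - v z = 2 * z * (1+z)⁻¹ := by
        simp only [hv]; field_simp; ring
      rw [he, Real.log_mul (by positivity : (2*z : ℝ) ≠ 0) (inv_ne_zero (ne_of_gt h1z')),
        Real.log_mul two_ne_zero (ne_of_gt hz0), Real.log_inv]
      ring
    have heq : (Real.log (1+z) - Real.log (1-z))/z
        + ((Real.log (1 + v z) - Real.log (1 - v z))/(v z)) * (2 * (-1/(1+z)^2))
        - (z⁻¹ * (Real.log (1+z) - Real.log (1-z))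
            + Real.log z * ((1+z)⁻¹ * 1 - (1-z)⁻¹ * (-1))) = 0 := by
      rw [hlog1, hlog2, hvz_eq]
      field_simp
      ring
    rw [show ((fun x => Real.log (1 + x)) - fun x => Real.log (1 - x)) z
      = Real.log (1+z) - Real.log (1-z) from rfl] at htot
    rwa [heq] at htot
  have hconst := const_on_open hder
  have hmemF : Ioo (0:ℝ) 1 ∈ 𝓝[<] (1:ℝ) := Ioo_mem_nhdsLT_of_mem ⟨zero_lt_one, le_refl 1⟩
  -- limits
  have ht2 : Tendsto (fun x => Li (-x)) (𝓝[<] (1:ℝ)) (𝓝 (Li (-1))) := by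
    apply Tendsto.comp (Li_cont (-1) ⟨le_refl _, by norm_num⟩)
    apply tendsto_nhdsWithin_of_tendsto_nhds_of_eventually_within
    · have h : Tendsto (fun x : ℝ => -x) (𝓝 (1:ℝ)) (𝓝 (-1:ℝ)) := by
        have h0 : Continuous (fun x : ℝ => -x) := continuous_neg
        simpa using h0.tendsto (1:ℝ)
      exact h.mono_left nhdsWithin_le_nhds
    · filter_upwards [hmemF] with x hx
      exact ⟨by linarith [hx.2], by linarith [hx.1]⟩
  have hvc : Tendsto v (𝓝[<] (1:ℝ)) (𝓝 0) := by
    have hc : ContinuousAt v 1 := by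
      have : ContinuousAt (fun x : ℝ => 1 + x) 1 := by fun_prop
      exact ((this.inv₀ (by norm_num)).const_mul 2).sub continuousAt_const
    have h : Tendsto v (𝓝[<] (1:ℝ)) (𝓝 (v 1)) :=
      hc.tendsto.mono_left nhdsWithin_le_nhds
    have hv1 : v 1 = 0 := by simp only [hv]; norm_num
    rwa [hv1] at h
  have hLiAt0 : ContinuousAt Li 0 :=
    Li_cont.continuousAt (Icc_mem_nhds (by norm_num) (by norm_num))
  have ht3a : Tendsto (fun x => Li (v x)) (𝓝[<] (1:ℝ)) (𝓝 0) := by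
    have := hLiAt0.tendsto.comp hvc
    rwa [Li_zero] at this
  have ht3b : Tendsto (fun x => Li (-(v x))) (𝓝[<] (1:ℝ)) (𝓝 0) := by
    have hvneg : Tendsto (fun x => -(v x)) (𝓝[<] (1:ℝ)) (𝓝 (0:ℝ)) := by
      simpa using hvc.neg
    have := hLiAt0.tendsto.comp hvneg
    rwa [Li_zero] at this
  have ht4 : Tendsto (fun x => Real.log x * (Real.log (1+x) - Real.log (1-x)))
      (𝓝[<] (1:ℝ)) (𝓝 0) := by
    have h41 : Tendsto (fun x : ℝ => Real.log x * Real.log (1+x)) (𝓝[<] (1:ℝ)) (𝓝 0) := by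
      have hc : ContinuousAt (fun x : ℝ => Real.log x * Real.log (1+x)) 1 := by
        apply ContinuousAt.mul
        · exact Real.continuousAt_log one_ne_zero
        · exact (Real.continuousAt_log (by norm_num)).comp (by fun_prop)
      have h : Tendsto (fun x : ℝ => Real.log x * Real.log (1+x)) (𝓝[<] (1:ℝ))
          (𝓝 (Real.log 1 * Real.log (1+1))) := hc.tendsto.mono_left nhdsWithin_le_nhds
      simpa using h
    have h := h41.sub log_log_lim
    have he : (fun x : ℝ => Real.log x * Real.log (1+x) - Real.log x * Real.log (1-x))
        = fun x : ℝ => Real.log x * (Real.log (1+x) - Real.log (1-x)) := by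
      funext x; ring
    rw [he] at h
    simpa using h
  have hφlim : Tendsto φ (𝓝[<] (1:ℝ)) (𝓝 ((Li 1 - Li (-1)) + (0 - 0) - 0)) :=
    ((tendsto_Li_one.sub ht2).add (ht3a.sub ht3b)).sub ht4
  set a : ℝ := Real.sqrt 2 - 1 with ha
  have haI : a ∈ Ioo (0:ℝ) 1 := ⟨by simp only [ha]; linarith [sqrt2_gt_one],
    by simp only [ha]; linarith [sqrt2_lt_two]⟩
  have hφconst : Tendsto φ (𝓝[<] (1:ℝ)) (𝓝 (φ a)) := by
    apply Tendsto.congr' _ tendsto_const_nhds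
    filter_upwards [hmemF] with y hy
    exact hconst a haI y hy
  have hval : φ a = (Li 1 - Li (-1)) + (0 - 0) - 0 := tendsto_nhds_unique hφconst hφlim
  -- now unfold φ a
  have hs2 : Real.sqrt 2 * Real.sqrt 2 = 2 := Real.mul_self_sqrt (by norm_num)
  have hs0 : Real.sqrt 2 ≠ 0 := by positivity
  have h1a : 1 + a = Real.sqrt 2 := by simp only [ha]; ring
  have hva : v a = a := by
    simp only [hv, h1a]
    have h2 : 2*(Real.sqrt 2)⁻¹ = Real.sqrt 2 := by
      field_simp
      rw [Real.sq_sqrt (by norm_num)]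
    rw [h2, ha]
  have h1ma : 1 - a = Real.sqrt 2 * a := by
    simp only [ha]
    nlinarith [hs2]
  have ha0 : (0:ℝ) < a := haI.1
  have hlog1ma : Real.log (1 - a) = Real.log (Real.sqrt 2) + Real.log a := by
    rw [h1ma, Real.log_mul hs0 (ne_of_gt ha0)]
  have h1alog : Real.log (1 + a) = Real.log (Real.sqrt 2) := by rw [h1a]
  rw [hφ] at hval
  simp only [hva] at hval
  rw [hlog1ma, h1alog, Li_one, Li_neg_one] at hval
  have : 2 * (Li a - Li (-a)) + (Real.log a)^2 = π^2/4 := by nlinarith [hval]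
  linarith [this]

lemma landen : Li (1 - Real.sqrt 2) + Li ((Real.sqrt 2 - 1) * (Real.sqrt 2)⁻¹)
    + (Real.log (Real.sqrt 2))^2/2 = 0 := by
  have hs2 : Real.sqrt 2 * Real.sqrt 2 = 2 := Real.mul_self_sqrt (by norm_num)
  have hs1 : (1:ℝ) < Real.sqrt 2 := sqrt2_gt_one
  have hslt : Real.sqrt 2 < 2 := sqrt2_lt_two
  have hs0 : Real.sqrt 2 ≠ 0 := by positivity
  set u : ℝ → ℝ := fun x => 1 + (x-1)⁻¹ with hu
  set φ : ℝ → ℝ := fun x => Li x + Li (u x) + (Real.log (1-x))^2/2 with hφ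
  have hL : 1 - Real.sqrt 2 < 0 := by linarith
  have hLm : -1 < 1 - Real.sqrt 2 := by linarith
  have huw : ∀ x : ℝ, x < 1 → u x = 1 - (1-x)⁻¹ := by
    intro x _
    simp only [hu]
    rw [show x - 1 = -(1-x) by ring, inv_neg]
    ring
  have hub : ∀ x ∈ Icc (1 - Real.sqrt 2) (0:ℝ), 0 ≤ u x ∧ u x ≤ 1 := by
    intro x hx
    have hx2 := hx.2
    have h1x : (1:ℝ) ≤ 1 - x := by linarith
    have h1xpos : (0:ℝ) < 1 - x := by linarith
    have hinv1 : (1-x)⁻¹ ≤ 1 := by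
      rw [inv_le_one_iff₀]
      right; exact h1x
    have hinv0 : 0 < (1-x)⁻¹ := inv_pos.2 h1xpos
    rw [huw x (by linarith)]
    constructor <;> linarith
  have hcont : ContinuousOn φ (Icc (1 - Real.sqrt 2) (0:ℝ)) := by
    have hsub : Icc (1 - Real.sqrt 2) (0:ℝ) ⊆ Icc (-1:ℝ) 1 :=
      Icc_subset_Icc (by linarith) (by norm_num)
    have hc1 : ContinuousOn Li (Icc (1 - Real.sqrt 2) (0:ℝ)) := Li_cont.mono hsub
    have hcu : ContinuousOn u (Icc (1 - Real.sqrt 2) (0:ℝ)) := by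
      apply continuousOn_const.add
      apply ContinuousOn.inv₀ (by fun_prop)
      intro x hx
      have := hx.2
      intro hc
      have : x = 1 := by linarith [sub_eq_zero.1 hc]
      linarith
    have hc2 : ContinuousOn (fun x => Li (u x)) (Icc (1 - Real.sqrt 2) (0:ℝ)) := by
      apply Li_cont.comp hcu
      intro x hx
      exact ⟨by linarith [(hub x hx).1], (hub x hx).2⟩
    have hc3 : ContinuousOn (fun x => (Real.log (1-x))^2/2) (Icc (1 - Real.sqrt 2) (0:ℝ)) := by
      intro x hx
      apply ContinuousAt.continuousWithinAt
      have hlc : ContinuousAt (fun y : ℝ => Real.log (1-y)) x :=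
        (Real.continuousAt_log (by have := hx.2; intro hc; nlinarith [hx.2])).comp (by fun_prop)
      exact (hlc.pow 2).div_const 2
    exact (hc1.add hc2).add hc3
  have hderiv : ∀ x ∈ Ico (1 - Real.sqrt 2) (0:ℝ), HasDerivWithinAt φ 0 (Ici x) x := by
    intro x hx
    obtain ⟨hxl, hxr⟩ := hx
    have hx0 : x ≠ 0 := ne_of_lt hxr
    have hx1 : x - 1 < 0 := by linarith
    have hx1' : x - 1 ≠ 0 := ne_of_lt hx1
    have h1xpos : (0:ℝ) < 1 - x := by linarith
    have h1x' : (1:ℝ) - x ≠ 0 := ne_of_gt h1xpos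
    have h1xgt : (1:ℝ) < 1 - x := by linarith
    have hiu : (1-x)⁻¹ < 1 := by
      rw [inv_lt_one_iff₀]
      right; exact h1xgt
    have hiu0 : 0 < (1-x)⁻¹ := inv_pos.2 h1xpos
    have hux0 : 0 < u x := by rw [huw x (by linarith)]; linarith
    have hux1 : u x < 1 := by rw [huw x (by linarith)]; linarith
    have hA : HasDerivAt Li (f x) x := Li_deriv (by linarith) (by linarith) hx0
    have hud : HasDerivAt u (-1/(x-1)^2) x := by
      have hinv : HasDerivAt (fun y : ℝ => (y-1)⁻¹) (-1/(x-1)^2) x := by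
        have h := ((hasDerivAt_id x).sub_const 1).fun_inv hx1'
        simpa using h
      exact hinv.const_add 1
    have hB : HasDerivAt (fun y => Li (u y)) (f (u x) * (-1/(x-1)^2)) x :=
      (Li_deriv (by linarith) hux1 (ne_of_gt hux0)).comp x hud
    have hlog : HasDerivAt (fun y : ℝ => Real.log (1-y)) ((1-x)⁻¹ * (-1)) x :=
      (Real.hasDerivAt_log h1x').comp x (by simpa using (hasDerivAt_id x).const_sub 1)
    have hC : HasDerivAt (fun y => (Real.log (1-y))^2/2)
        ((2 * (Real.log (1-x))^(2-1) * ((1-x)⁻¹ * (-1)))/2) x := (hlog.pow 2).div_const 2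
    have htot := (hA.add hB).add hC
    have h1u : 1 - u x = (1-x)⁻¹ := by rw [huw x (by linarith)]; ring
    have hu_ne : u x ≠ 0 := ne_of_gt hux0
    have heq : f x + f (u x) * (-1/(x-1)^2)
        + (2 * (Real.log (1-x))^(2-1) * ((1-x)⁻¹ * (-1)))/2 = 0 := by
      simp only [f]
      rw [h1u, Real.log_inv]
      rw [huw x (by linarith)] at hu_ne ⊢
      field_simp
      have hxinv : x * x⁻¹ = 1 := mul_inv_cancel₀ hx0
      linear_combination (Real.log (1-x) * (1-x)^2) * hxinv
    rw [heq] at htot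
    exact htot.hasDerivWithinAt
  have key := constant_of_has_deriv_right_zero hcont hderiv 0 (right_mem_Icc.2 hL.le)
  have hu0 : u 0 = 0 := by simp only [hu]; norm_num
  have hφ0 : φ 0 = 0 := by
    simp only [hφ, hu0, Li_zero]
    norm_num
  have huL : u (1 - Real.sqrt 2) = (Real.sqrt 2 - 1) * (Real.sqrt 2)⁻¹ := by
    simp only [hu]
    rw [show (1 - Real.sqrt 2) - 1 = -(Real.sqrt 2) by ring, inv_neg]
    rw [sub_mul, mul_inv_cancel₀ hs0]
    ring
  have hφL : φ (1 - Real.sqrt 2) = Li (1 - Real.sqrt 2)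
      + Li ((Real.sqrt 2 - 1) * (Real.sqrt 2)⁻¹) + (Real.log (Real.sqrt 2))^2/2 := by
    simp only [hφ, huL]
    rw [show (1:ℝ) - (1 - Real.sqrt 2) = Real.sqrt 2 by ring]
  rw [← hφL, ← key, hφ0]



lemma inner_eval {x A B p q : ℝ} (hx : x ≠ 0) (hB : 0 < B)
    (hp : 0 < A + B*p) (hq : 0 < A + B*q) :
    ∫ y in p..q, B/(x*(A+B*y)) = (Real.log (A+B*q) - Real.log (A+B*p))/x := by
  have hpos : ∀ y ∈ uIcc p q, 0 < A + B*y := by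
    intro y hy
    rcases mem_uIcc.1 hy with ⟨h1, _⟩ | ⟨h1, _⟩
    · nlinarith
    · nlinarith
  have hF : ∀ y ∈ uIcc p q, HasDerivAt (fun y => Real.log (A+B*y)/x) (B/(x*(A+B*y))) y := by
    intro y hy
    have hne := ne_of_gt (hpos y hy)
    have h : HasDerivAt (fun y => Real.log (A+B*y)/x) ((A+B*y)⁻¹ * (B*1)/x) y :=
      by
        have h0 := (Real.hasDerivAt_log hne).comp y
          (((hasDerivAt_id' y).const_mul B).const_add A)
        exact h0.div_const x
    have heq : (A+B*y)⁻¹ * (B*1)/x = B/(x*(A+B*y)) := by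
      field_simp
    rwa [heq] at h
  have hint : IntervalIntegrable (fun y => B/(x*(A+B*y))) volume p q := by
    apply ContinuousOn.intervalIntegrable
    apply continuousOn_const.div (by fun_prop)
    intro y hy
    exact mul_ne_zero hx (ne_of_gt (hpos y hy))
  rw [intervalIntegral.integral_eq_sub_of_hasDerivAt hF hint]
  ring

lemma congr_Ioo {a b : ℝ} {F G : ℝ → ℝ} (hab : a ≤ b)
    (h : ∀ x ∈ Ioo a b, F x = G x) :
    ∫ x in a..b, F x = ∫ x in a..b, G x := by
  apply intervalIntegral.integral_congr_ae
  have hael : ∀ᵐ x : ℝ, x ≠ b := by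
    apply MeasureTheory.ae_iff.mpr
    simp only [ne_eq, not_not, setOf_eq_eq_singleton]
    exact measure_singleton b
  filter_upwards [hael] with x hxb hxI
  rw [Set.uIoc_of_le hab] at hxI
  exact h x ⟨hxI.1, lt_of_le_of_ne hxI.2 hxb⟩

-- Term 1
lemma term1 : (∫ x in (0:ℝ)..1, ∫ y in (1 - x)..1, 1 / (x * y)) = Li 1 := by
  rw [congr_Ioo zero_le_one (fun x hx => ?_)]
  · rfl
  obtain ⟨hx0, hx1⟩ := hx
  have h1 : (∫ y in (1 - x)..1, 1 / (x * y))
      = ∫ y in (1 - x)..1, (1:ℝ)/(x*(0+1*y)) := by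
    apply intervalIntegral.integral_congr
    intro y _
    norm_num
  rw [h1, inner_eval (ne_of_gt hx0) one_pos (by norm_num; linarith) (by norm_num)]
  show (Real.log (0+1*1) - Real.log (0+1*(1-x)))/x = f x
  rw [show (0:ℝ)+1*1 = 1 by norm_num, show (0:ℝ)+1*(1-x) = 1-x by ring, Real.log_one, f]
  ring

-- Term 5
lemma term5 : (∫ x in (0:ℝ)..1,
    ∫ y in (1 - (2 + Real.sqrt 2) * x)..(1 - (1 + Real.sqrt 2) * x),
      1 / (x * ((1 + Real.sqrt 2) * x + y))) = Li 1 := by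
  rw [congr_Ioo zero_le_one (fun x hx => ?_)]
  · rfl
  obtain ⟨hx0, hx1⟩ := hx
  have hs1 := sqrt2_gt_one
  have h1 : (∫ y in (1 - (2 + Real.sqrt 2) * x)..(1 - (1 + Real.sqrt 2) * x),
        1 / (x * ((1 + Real.sqrt 2) * x + y)))
      = ∫ y in (1 - (2 + Real.sqrt 2) * x)..(1 - (1 + Real.sqrt 2) * x),
        (1:ℝ)/(x*((1 + Real.sqrt 2) * x + 1*y)) := by
    apply intervalIntegral.integral_congr
    intro y _
    norm_num
  rw [h1, inner_eval (ne_of_gt hx0) one_pos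
    (by nlinarith) (by nlinarith)]
  rw [show (1 + Real.sqrt 2) * x + 1*(1 - (1 + Real.sqrt 2) * x) = 1 by ring,
    show (1 + Real.sqrt 2) * x + 1*(1 - (2 + Real.sqrt 2) * x) = 1 - x by ring,
    Real.log_one, f]
  ring



lemma hs2 : Real.sqrt 2 * Real.sqrt 2 = 2 := Real.mul_self_sqrt (by norm_num)
lemma hs0 : Real.sqrt 2 ≠ 0 := by
  have := sqrt2_gt_one; intro h; rw [h] at this; linarith

lemma h0mem : (0:ℝ) ∈ Icc (-1:ℝ) 1 := by norm_num
lemma h1mem : (1:ℝ) ∈ Icc (-1:ℝ) 1 := by norm_num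

lemma term2 : (∫ x in (0:ℝ)..(Real.sqrt 2 - 1),
    ∫ y in (1 - (1 + Real.sqrt 2) * x)..(1 - x), 1 / (x * (x + y)))
    = Li (Real.sqrt 2 * (Real.sqrt 2 - 1)) := by
  have hs1 := sqrt2_gt_one
  have ha0 : (0:ℝ) ≤ Real.sqrt 2 - 1 := by linarith
  have hpt : ∀ x ∈ Ioo (0:ℝ) (Real.sqrt 2 - 1),
      (∫ y in (1 - (1 + Real.sqrt 2) * x)..(1 - x), 1 / (x * (x + y)))
      = Real.sqrt 2 * f (Real.sqrt 2 * x) := by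
    intro x hx
    obtain ⟨hx0, hx1⟩ := hx
    have h1 : (∫ y in (1 - (1 + Real.sqrt 2) * x)..(1 - x), 1 / (x * (x + y)))
        = ∫ y in (1 - (1 + Real.sqrt 2) * x)..(1 - x), (1:ℝ)/(x*(x+1*y)) := by
      apply intervalIntegral.integral_congr
      intro y _
      norm_num
    rw [h1, inner_eval (ne_of_gt hx0) one_pos
      (by nlinarith [hs2]) (by nlinarith)]
    rw [show x + 1*(1-x) = 1 by ring,
      show x + 1*(1 - (1 + Real.sqrt 2) * x) = 1 - Real.sqrt 2 * x by ring,
      Real.log_one, f]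
    have hsx : Real.sqrt 2 * x ≠ 0 := mul_ne_zero hs0 (ne_of_gt hx0)
    field_simp
    ring
  rw [congr_Ioo ha0 hpt, intervalIntegral.integral_const_mul,
    intervalIntegral.integral_comp_mul_left f hs0, mul_zero, smul_eq_mul,
    ← mul_assoc, mul_inv_cancel₀ hs0, one_mul]
  rfl

lemma term3 : (∫ x in (Real.sqrt 2 - 1)..(1:ℝ),
      ∫ y in ((1 - (1 + Real.sqrt 2) * x) / Real.sqrt 2)..(1 - x), 1 / (x * (x + y)))
    = Li 1 - Li (Real.sqrt 2 - 1) + Real.log (Real.sqrt 2) * (-Real.log (Real.sqrt 2 - 1)) := by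
  have hs1 := sqrt2_gt_one
  have hslt := sqrt2_lt_two
  have ha1 : Real.sqrt 2 - 1 ≤ 1 := by linarith
  have hmem : Real.sqrt 2 - 1 ∈ Icc (-1:ℝ) 1 := ⟨by linarith, by linarith⟩
  have hpt : ∀ x ∈ Ioo (Real.sqrt 2 - 1) (1:ℝ),
      (∫ y in ((1 - (1 + Real.sqrt 2) * x) / Real.sqrt 2)..(1 - x), 1 / (x * (x + y)))
      = f x + Real.log (Real.sqrt 2) * x⁻¹ := by
    intro x hx
    obtain ⟨hx0, hx1⟩ := hx
    have hxpos : (0:ℝ) < x := by linarith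
    have h1x : (0:ℝ) < 1 - x := by linarith
    have he1 : x + 1*((1 - (1 + Real.sqrt 2) * x) / Real.sqrt 2) = (1-x)/Real.sqrt 2 := by
      field_simp
      ring
    have h1 : (∫ y in ((1 - (1 + Real.sqrt 2) * x) / Real.sqrt 2)..(1 - x), 1 / (x * (x + y)))
        = ∫ y in ((1 - (1 + Real.sqrt 2) * x) / Real.sqrt 2)..(1 - x), (1:ℝ)/(x*(x+1*y)) := by
      apply intervalIntegral.integral_congr
      intro y _
      norm_num
    rw [h1, inner_eval (ne_of_gt hxpos) one_pos
      (by rw [he1]; positivity) (by nlinarith)]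
    rw [he1, show x + 1*(1-x) = 1 by ring, Real.log_one,
      Real.log_div (ne_of_gt h1x) hs0, f]
    field_simp
    ring
  rw [congr_Ioo ha1 hpt]
  have hfa : IntervalIntegrable f volume (Real.sqrt 2 - 1) 1 :=
    f_ii hmem h1mem
  have hfb : IntervalIntegrable (fun x => Real.log (Real.sqrt 2) * x⁻¹) volume
      (Real.sqrt 2 - 1) 1 := by
    apply ContinuousOn.intervalIntegrable
    apply continuousOn_const.mul
    apply ContinuousOn.inv₀ continuousOn_id
    intro x hx
    rw [Set.uIcc_of_le ha1] at hx
    have := hx.1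
    intro hc
    simp only [id_eq] at hc
    rw [hc] at this
    linarith
  rw [intervalIntegral.integral_add hfa hfb, intervalIntegral.integral_const_mul,
    integral_inv (by
      rw [Set.uIcc_of_le ha1]
      intro hc
      linarith [hc.1] : (0:ℝ) ∉ Set.uIcc (Real.sqrt 2 - 1) 1),
    one_div, Real.log_inv]
  have hsub : ∫ x in (Real.sqrt 2 - 1)..1, f x = Li 1 - Li (Real.sqrt 2 - 1) := by
    rw [Li, Li, ← intervalIntegral.integral_interval_sub_left
      (f_ii h0mem h1mem) (f_ii h0mem hmem)]
  rw [hsub]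

lemma term4 : (∫ x in (Real.sqrt 2 - 1)..(1:ℝ),
      ∫ y in (1 - (1 + Real.sqrt 2) * x)..((1 - (1 + Real.sqrt 2) * x) / Real.sqrt 2),
        Real.sqrt 2 / (x * ((1 + Real.sqrt 2) * x + Real.sqrt 2 * y)))
    = Li ((Real.sqrt 2)⁻¹) - Li ((Real.sqrt 2 - 1) * (Real.sqrt 2)⁻¹)
      - Real.log (Real.sqrt 2) * (-Real.log (Real.sqrt 2 - 1)) := by
  have hs1 := sqrt2_gt_one
  have hslt := sqrt2_lt_two
  have ha1 : Real.sqrt 2 - 1 ≤ 1 := by linarith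
  have hspos : (0:ℝ) < Real.sqrt 2 := by linarith
  have hinvpos : (0:ℝ) < (Real.sqrt 2)⁻¹ := inv_pos.2 hspos
  have hsinv : Real.sqrt 2 * (Real.sqrt 2)⁻¹ = 1 := mul_inv_cancel₀ hs0
  have hinvlt : (Real.sqrt 2)⁻¹ < 1 := by nlinarith
  have hmem : Real.sqrt 2 - 1 ∈ Icc (-1:ℝ) 1 := ⟨by linarith, by linarith⟩
  have hmemi : (Real.sqrt 2)⁻¹ ∈ Icc (-1:ℝ) 1 := ⟨by linarith, by linarith⟩
  have hmemc : (Real.sqrt 2 - 1) * (Real.sqrt 2)⁻¹ ∈ Icc (-1:ℝ) 1 := by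
    constructor <;> nlinarith
  have hpt : ∀ x ∈ Ioo (Real.sqrt 2 - 1) (1:ℝ),
      (∫ y in (1 - (1 + Real.sqrt 2) * x)..((1 - (1 + Real.sqrt 2) * x) / Real.sqrt 2),
        Real.sqrt 2 / (x * ((1 + Real.sqrt 2) * x + Real.sqrt 2 * y)))
      = (Real.sqrt 2)⁻¹ * f (x * (Real.sqrt 2)⁻¹) - Real.log (Real.sqrt 2) * x⁻¹ := by
    intro x hx
    obtain ⟨hx0, hx1⟩ := hx
    have hxpos : (0:ℝ) < x := by linarith
    have he2 : (1 + Real.sqrt 2) * x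
        + Real.sqrt 2 * ((1 - (1 + Real.sqrt 2) * x) / Real.sqrt 2) = 1 := by
      field_simp
      ring
    have he3 : (1 + Real.sqrt 2) * x + Real.sqrt 2 * (1 - (1 + Real.sqrt 2) * x)
        = Real.sqrt 2 - x := by
      linear_combination (-x) * hs2
    rw [inner_eval (ne_of_gt hxpos) hspos (by rw [he3]; linarith) (by rw [he2]; norm_num)]
    rw [he2, he3, Real.log_one]
    have h5 : (0:ℝ) < 1 - x * (Real.sqrt 2)⁻¹ := by nlinarith
    have he4 : Real.sqrt 2 - x = Real.sqrt 2 * (1 - x * (Real.sqrt 2)⁻¹) := by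
      field_simp
    rw [he4, Real.log_mul hs0 (ne_of_gt h5), f]
    have hne : x * (Real.sqrt 2)⁻¹ ≠ 0 := by positivity
    field_simp
    ring
  rw [congr_Ioo ha1 hpt]
  have h4a : IntervalIntegrable (fun x => (Real.sqrt 2)⁻¹ * f (x * (Real.sqrt 2)⁻¹))
      volume (Real.sqrt 2 - 1) 1 := by
    have h := (f_ii hmemc hmemi).comp_mul_right (c := (Real.sqrt 2)⁻¹)
    have e1 : ((Real.sqrt 2 - 1) * (Real.sqrt 2)⁻¹)/(Real.sqrt 2)⁻¹ = Real.sqrt 2 - 1 := by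
      field_simp
    have e2 : (Real.sqrt 2)⁻¹/(Real.sqrt 2)⁻¹ = 1 := div_self (inv_ne_zero hs0)
    rw [e1, e2] at h
    exact h.const_mul _
  have h4b : IntervalIntegrable (fun x => Real.log (Real.sqrt 2) * x⁻¹) volume
      (Real.sqrt 2 - 1) 1 := by
    apply ContinuousOn.intervalIntegrable
    apply continuousOn_const.mul
    apply ContinuousOn.inv₀ continuousOn_id
    intro x hx
    rw [Set.uIcc_of_le ha1] at hx
    have := hx.1
    intro hc
    simp only [id_eq] at hc
    rw [hc] at this
    linarith
  rw [intervalIntegral.integral_sub h4a h4b, intervalIntegral.integral_const_mul,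
    intervalIntegral.integral_const_mul,
    integral_inv (by
      rw [Set.uIcc_of_le ha1]
      intro hc
      linarith [hc.1] : (0:ℝ) ∉ Set.uIcc (Real.sqrt 2 - 1) 1),
    one_div, Real.log_inv,
    intervalIntegral.integral_comp_mul_right f (inv_ne_zero hs0), inv_inv, smul_eq_mul,
    ← mul_assoc, inv_mul_cancel₀ hs0, one_mul, one_mul]
  have hsub : ∫ x in ((Real.sqrt 2 - 1) * (Real.sqrt 2)⁻¹)..((Real.sqrt 2)⁻¹), f x
      = Li ((Real.sqrt 2)⁻¹) - Li ((Real.sqrt 2 - 1) * (Real.sqrt 2)⁻¹) := by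
    rw [Li, Li, ← intervalIntegral.integral_interval_sub_left
      (f_ii h0mem hmemi) (f_ii h0mem hmemc)]
  rw [hsub]



lemma total :
    2 * (∫ x in (0:ℝ)..1, ∫ y in (1 - x)..1, 1 / (x * y))
      + (∫ x in (0:ℝ)..(Real.sqrt 2 - 1),
          ∫ y in (1 - (1 + Real.sqrt 2) * x)..(1 - x), 1 / (x * (x + y)))
      + (∫ x in (Real.sqrt 2 - 1)..(1:ℝ),
          ∫ y in ((1 - (1 + Real.sqrt 2) * x) / Real.sqrt 2)..(1 - x), 1 / (x * (x + y)))
      + (∫ x in (Real.sqrt 2 - 1)..(1:ℝ),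
          ∫ y in (1 - (1 + Real.sqrt 2) * x)..((1 - (1 + Real.sqrt 2) * x) / Real.sqrt 2),
            Real.sqrt 2 / (x * ((1 + Real.sqrt 2) * x + Real.sqrt 2 * y)))
      + (∫ x in (0:ℝ)..1,
          ∫ y in (1 - (2 + Real.sqrt 2) * x)..(1 - (1 + Real.sqrt 2) * x),
            1 / (x * ((1 + Real.sqrt 2) * x + y)))
      = 3 * Real.pi ^ 2 / 4 := by
  have hs1 := sqrt2_gt_one
  have hslt := sqrt2_lt_two
  have hS2 := hs2
  have hapos : (0:ℝ) < Real.sqrt 2 - 1 := by linarith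
  have hinvpos : (0:ℝ) < (Real.sqrt 2)⁻¹ := inv_pos.2 (by linarith)
  rw [term1, term2, term3, term4, term5]
  have hrefl1 := reflection (Real.sqrt 2 - 1) ⟨hapos, by linarith⟩
  rw [show (1:ℝ) - (Real.sqrt 2 - 1) = Real.sqrt 2 * (Real.sqrt 2 - 1) by
      linear_combination (-1:ℝ) * hS2] at hrefl1
  rw [Real.log_mul hs0 (ne_of_gt hapos)] at hrefl1
  have hc_eq : (Real.sqrt 2 - 1) * (Real.sqrt 2)⁻¹ = 1 - (Real.sqrt 2)⁻¹ := by
    rw [sub_mul, mul_inv_cancel₀ hs0]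
    ring
  have hcmem : (Real.sqrt 2 - 1) * (Real.sqrt 2)⁻¹ ∈ Ioo (0:ℝ) 1 := by
    constructor
    · positivity
    · rw [hc_eq]; linarith
  have hrefl2 := reflection _ hcmem
  rw [show (1:ℝ) - (Real.sqrt 2 - 1) * (Real.sqrt 2)⁻¹ = (Real.sqrt 2)⁻¹ by
      rw [hc_eq]; ring] at hrefl2
  rw [Real.log_mul (ne_of_gt hapos) (inv_ne_zero hs0), Real.log_inv] at hrefl2
  have hland := landen
  rw [show (1:ℝ) - Real.sqrt 2 = -(Real.sqrt 2 - 1) by ring] at hland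
  have hfix := fixed_point
  rw [Li_one]
  linear_combination hrefl1 + hrefl2 - 2*hland - 2*hfix

end TRT

/-- The total integral of the return time function over the Poincaré section Ω equals 3π²/4,
the covolume of the Veech group Γ of 𝓛. -/
theorem total_return_time_integral :
    2 * (∫ x in (0:ℝ)..1, ∫ y in (1 - x)..1, 1 / (x * y))
      + (∫ x in (0:ℝ)..(Real.sqrt 2 - 1),
          ∫ y in (1 - (1 + Real.sqrt 2) * x)..(1 - x), 1 / (x * (x + y)))
      + (∫ x in (Real.sqrt 2 - 1)..(1:ℝ),
          ∫ y in ((1 - (1 + Real.sqrt 2) * x) / Real.sqrt 2)..(1 - x), 1 / (x * (x + y)))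
      + (∫ x in (Real.sqrt 2 - 1)..(1:ℝ),
          ∫ y in (1 - (1 + Real.sqrt 2) * x)..((1 - (1 + Real.sqrt 2) * x) / Real.sqrt 2),
            Real.sqrt 2 / (x * ((1 + Real.sqrt 2) * x + Real.sqrt 2 * y)))
      + (∫ x in (0:ℝ)..1,
          ∫ y in (1 - (2 + Real.sqrt 2) * x)..(1 - (1 + Real.sqrt 2) * x),
            1 / (x * ((1 + Real.sqrt 2) * x + y)))
      = 3 * Real.pi ^ 2 / 4 :=
  TRT.total
end
end
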